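/- Let λ = 2 − 2H and fix 0 < τ_1 < τ_0 < τ_2 < ∞. Then there exist a constant 𝒦 > 0 (depending only on H, τ_1, τ_2) and t_0 > 0 such that for all t ≥ t_0, r*(t) := sup |r_{u,u'}(s,τ,s',τ')| ≤ 𝒦 t^{−λ}, the supremum being taken over all u, u', s, s' > 0 and τ, τ' ∈ (τ_1, τ_2) with |us − u's'|/u ≥ t and |us − u's'|/u' ≥ t. -/

import Mathlib

open MeasureTheory Filter Set

noncomputable section

/-- The point `τ₀ = H/(1-H)`. -/
def tau0 (H : ℝ) : ℝ := H / (1 - H)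

/-- The correlation function `r_{u,u'}(s,τ,s',τ')` of the field `Z_u` (multiplied by
`ν(τ)ν(τ')`). -/
def rcorr (H u u' s τ s' τ' : ℝ) : ℝ :=
  (|u * s - u' * s'| ^ (2 * H) / (2 * (u * τ * (u' * τ')) ^ H)) *
    (|1 + u * τ / (u * s - u' * s')| ^ (2 * H)
      - |1 + (u * τ - u' * τ') / (u * s - u' * s')| ^ (2 * H)
      + |1 - u' * τ' / (u * s - u' * s')| ^ (2 * H) - 1)
lemma gderiv (p x : ℝ) (hx : 0 < 1 + x) :
    HasDerivAt (fun y : ℝ => (1 + y) ^ p) (p * (1 + x) ^ (p - 1)) x := by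
  have h := Real.hasDerivAt_rpow_const (x := 1 + x) (p := p) (Or.inl hx.ne')
  have h2 : HasDerivAt (fun y : ℝ => 1 + y) 1 x := by
    simpa using (hasDerivAt_id x).const_add (1 : ℝ)
  simpa [Function.comp_def] using h.comp x h2

lemma second_diff (p : ℝ) (hp0 : 0 < p) (hp2 : p < 2) (a b : ℝ)
    (ha : |a| ≤ 1/4) (hb : |b| ≤ 1/4) :
    |(1+a)^p - (1+(a-b))^p + (1-b)^p - 1| ≤ 8 * (|a| * |b|) := by
  set g : ℝ → ℝ := fun y => (1 + y) ^ p with hg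
  set g1 : ℝ → ℝ := fun y => p * (1 + y) ^ (p - 1) with hg1
  have hS : ∀ x ∈ Icc (-(1:ℝ)/2) (1/2), (0:ℝ) < 1 + x := by
    intro x hx
    have := hx.1; nlinarith [hx.1, hx.2]
  -- derivative bound for g1 on S
  have hg1d : ∀ x ∈ Icc (-(1:ℝ)/2) (1/2),
      HasDerivWithinAt g1 (p * ((p-1) * (1+x)^(p-1-1))) (Icc (-(1:ℝ)/2) (1/2)) x := by
    intro x hx
    exact ((gderiv (p-1) x (hS x hx)).const_mul p).hasDerivWithinAt
  have hbound : ∀ x ∈ Icc (-(1:ℝ)/2) (1/2), ‖p * ((p-1) * (1+x)^(p-1-1))‖ ≤ 8 := by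
    intro x hx
    have h1 : (0:ℝ) < 1 + x := hS x hx
    have hhalf : (1:ℝ)/2 ≤ 1 + x := by nlinarith [hx.1]
    have hpow : (1+x) ^ (p-1-1) ≤ ((1:ℝ)/2) ^ (p-1-1) :=
      Real.rpow_le_rpow_of_nonpos (by norm_num) hhalf (by linarith)
    have hpow2 : ((1:ℝ)/2) ^ (p-1-1) ≤ ((1:ℝ)/2) ^ (-2:ℝ) :=
      Real.rpow_le_rpow_of_exponent_ge (by norm_num) (by norm_num) (by linarith)
    have h4 : ((1:ℝ)/2) ^ (-2:ℝ) = 4 := by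
      rw [show (-2:ℝ) = ((-2:ℤ):ℝ) by norm_num, Real.rpow_intCast]
      norm_num
    have hpownn : (0:ℝ) ≤ (1+x) ^ (p-1-1) := Real.rpow_nonneg h1.le _
    have hp1 : |p - 1| ≤ 1 := by rw [abs_le]; constructor <;> linarith
    have : ‖p * ((p-1) * (1+x)^(p-1-1))‖ = |p| * (|p-1| * (1+x)^(p-1-1)) := by
      rw [Real.norm_eq_abs, abs_mul, abs_mul, abs_of_nonneg hpownn]
    rw [this, abs_of_pos hp0]
    have hpow4 : (1+x) ^ (p-1-1) ≤ 4 := by linarith [hpow, hpow2, h4.le, h4.ge]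
    have hq : |p-1| * (1+x)^(p-1-1) ≤ 1 * 4 :=
      mul_le_mul hp1 hpow4 hpownn (by norm_num)
    nlinarith [mul_nonneg (abs_nonneg (p-1)) hpownn]
  have hconv : Convex ℝ (Icc (-(1:ℝ)/2) (1/2)) := convex_Icc _ _
  have hlip : ∀ x ∈ Icc (-(1:ℝ)/2) (1/2), ∀ y ∈ Icc (-(1:ℝ)/2) (1/2),
      |g1 y - g1 x| ≤ 8 * |y - x| := by
    intro x hx y hy
    have := hconv.norm_image_sub_le_of_norm_hasDerivWithin_le hg1d hbound hx hy
    simpa [Real.norm_eq_abs] using this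
  -- now h
  set T : Set ℝ := Icc (-(1:ℝ)/4) (1/4) with hT
  have haT : ∀ y ∈ T, a + y ∈ Icc (-(1:ℝ)/2) (1/2) := by
    intro y hy
    have := abs_le.1 ha
    constructor <;> [nlinarith [hy.1]; nlinarith [hy.2]]
  have hyS : ∀ y ∈ T, y ∈ Icc (-(1:ℝ)/2) (1/2) := by
    intro y hy; constructor <;> [linarith [hy.1]; linarith [hy.2]]
  have hhd : ∀ y ∈ T, HasDerivWithinAt (fun y => g (a + y) - g y)
      (g1 (a + y) - g1 y) T y := by
    intro y hy
    have h1 : HasDerivAt (fun y : ℝ => g (a + y)) (g1 (a + y)) y := by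
      have hd := gderiv p (a + y) (hS _ (haT y hy))
      have h2 : HasDerivAt (fun z : ℝ => a + z) 1 y := by
        simpa using (hasDerivAt_id y).const_add a
      have := hd.comp y h2
      simpa [hg, hg1, Function.comp_def] using this
    have h2 : HasDerivAt g (g1 y) y := gderiv p y (hS _ (hyS y hy))
    exact (h1.sub h2).hasDerivWithinAt
  have hhbound : ∀ y ∈ T, ‖g1 (a + y) - g1 y‖ ≤ 8 * |a| := by
    intro y hy
    have h := hlip y (hyS y hy) (a + y) (haT y hy)
    have e : a + y - y = a := by ring
    rw [e] at h
    rw [Real.norm_eq_abs]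
    exact h
  have hTc : Convex ℝ T := convex_Icc _ _
  have h0T : (0:ℝ) ∈ T := by constructor <;> norm_num
  have hbT : -b ∈ T := by
    have h := abs_le.1 hb
    exact ⟨by linarith [h.2], by linarith [h.1]⟩
  have key := hTc.norm_image_sub_le_of_norm_hasDerivWithin_le hhd hhbound hbT h0T
  have e : (fun y => g (a + y) - g y) 0 - (fun y => g (a + y) - g y) (-b)
      = (1+a)^p - (1+(a-b))^p + (1-b)^p - 1 := by
    simp only [hg]
    have e1 : a + -b = a - b := by ring
    have e2 : (1:ℝ) + -b = 1 - b := by ring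
    rw [add_zero, e1, e2, add_zero, Real.one_rpow]
    ring
  rw [Real.norm_eq_abs, e] at key
  calc |(1+a)^p - (1+(a-b))^p + (1-b)^p - 1| ≤ 8 * |a| * ‖(0:ℝ) - -b‖ := key
    _ = 8 * (|a| * |b|) := by rw [Real.norm_eq_abs]; simp [abs_neg]; ring
lemma alg_id (H A B E : ℝ) (hA : 0 < A) (hB : 0 < B) (hE : 0 < E) :
    E ^ (2*H) / (2 * (A*B)^H) * (8 * (A/E * (B/E)))
      = 4 * ((A/E)^(1-H) * (B/E)^(1-H)) := by
  rw [Real.mul_rpow hA.le hB.le,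
      Real.div_rpow hA.le hE.le, Real.div_rpow hB.le hE.le,
      Real.rpow_sub hA, Real.rpow_sub hB, Real.rpow_sub hE,
      show (2:ℝ)*H = H + H by ring, Real.rpow_add hE,
      Real.rpow_one, Real.rpow_one, Real.rpow_one]
  have h1 : A ^ H ≠ 0 := (Real.rpow_pos_of_pos hA H).ne'
  have h2 : B ^ H ≠ 0 := (Real.rpow_pos_of_pos hB H).ne'
  have h3 : E ^ H ≠ 0 := (Real.rpow_pos_of_pos hE H).ne'
  field_simp
  ring

theorem statement11 (H : ℝ) (hH : H ∈ Set.Ioo (0:ℝ) 1)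
    (τ₁ τ₂ : ℝ) (hτ₁ : 0 < τ₁) (hτ₁0 : τ₁ < tau0 H) (hτ₂ : tau0 H < τ₂) :
    ∃ 𝒦 > (0:ℝ), ∃ t₀ > (0:ℝ), ∀ t, t₀ ≤ t →
      ∀ u u' s s' τ τ' : ℝ, 0 < u → 0 < u' → 0 < s → 0 < s' →
        τ ∈ Set.Ioo τ₁ τ₂ → τ' ∈ Set.Ioo τ₁ τ₂ →
        t ≤ |u * s - u' * s'| / u → t ≤ |u * s - u' * s'| / u' →
        |rcorr H u u' s τ s' τ'| ≤ 𝒦 * t ^ (-(2 - 2 * H)) := by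
  obtain ⟨hH0, hH1⟩ := hH
  have hτ0pos : 0 < tau0 H := div_pos hH0 (by linarith)
  have hτ₂pos : 0 < τ₂ := hτ0pos.trans hτ₂
  refine ⟨4 * τ₂ ^ (2 - 2*H), by positivity, 4 * τ₂, by positivity, ?_⟩
  intro t ht u u' s s' τ τ' hu hu' hs hs' hτ hτ' h1 h2
  have ht0 : 0 < t := lt_of_lt_of_le (by positivity) ht
  have hE : t * u ≤ |u * s - u' * s'| := (le_div_iff₀ hu).1 h1
  have hE' : t * u' ≤ |u * s - u' * s'| := (le_div_iff₀ hu').1 h2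
  have hEpos : 0 < |u * s - u' * s'| := lt_of_lt_of_le (by positivity) hE
  have hD : u * s - u' * s' ≠ 0 := by
    intro h; rw [h] at hEpos; simp at hEpos
  have hq : τ₂ / t ≤ 1/4 := by rw [div_le_iff₀ ht0]; linarith
  -- bounds on a and b
  have ha2 : u * τ / |u * s - u' * s'| ≤ τ₂ / t := by
    rw [div_le_div_iff₀ hEpos ht0]
    nlinarith [mul_le_mul_of_nonneg_left hE hτ₂pos.le, mul_nonneg (mul_pos ht0 hu).le (sub_nonneg.2 hτ.2.le)]
  have hb2 : u' * τ' / |u * s - u' * s'| ≤ τ₂ / t := by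
    rw [div_le_div_iff₀ hEpos ht0]
    nlinarith [mul_le_mul_of_nonneg_left hE' hτ₂pos.le, mul_nonneg (mul_pos ht0 hu').le (sub_nonneg.2 hτ'.2.le)]
  have hτpos : 0 < τ := hτ₁.trans hτ.1
  have hτ'pos : 0 < τ' := hτ₁.trans hτ'.1
  have habs_a : |u * τ / (u * s - u' * s')| = u * τ / |u * s - u' * s'| := by
    rw [abs_div, abs_of_pos (mul_pos hu hτpos)]
  have habs_b : |u' * τ' / (u * s - u' * s')| = u' * τ' / |u * s - u' * s'| := by
    rw [abs_div, abs_of_pos (mul_pos hu' hτ'pos)]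
  simp only [rcorr]
  rw [sub_div]
  set a := u * τ / (u * s - u' * s') with hadef
  set b := u' * τ' / (u * s - u' * s') with hbdef
  have ha : |a| ≤ 1/4 := by rw [hadef, habs_a]; linarith
  have hb : |b| ≤ 1/4 := by rw [hbdef, habs_b]; linarith
  have ha' := abs_le.1 ha
  have hb' := abs_le.1 hb
  have e1 : |1 + a| = 1 + a := abs_of_pos (by linarith)
  have e2 : |1 + (a - b)| = 1 + (a - b) := abs_of_pos (by linarith)
  have e3 : |1 - b| = 1 - b := abs_of_pos (by linarith)
  rw [e1, e2, e3, abs_mul]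
  have hX : (0:ℝ) ≤ |u * s - u' * s'| ^ (2*H) / (2 * (u * τ * (u' * τ')) ^ H) := by
    positivity
  rw [abs_of_nonneg hX]
  have hbr := second_diff (2*H) (by linarith) (by linarith) a b ha hb
  calc |u * s - u' * s'| ^ (2*H) / (2 * (u * τ * (u' * τ')) ^ H) *
        |(1+a)^(2*H) - (1+(a-b))^(2*H) + (1-b)^(2*H) - 1|
      ≤ |u * s - u' * s'| ^ (2*H) / (2 * (u * τ * (u' * τ')) ^ H) *
        (8 * (|a| * |b|)) := mul_le_mul_of_nonneg_left hbr hX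
    _ = |u * s - u' * s'| ^ (2*H) / (2 * (u * τ * (u' * τ')) ^ H) *
        (8 * (u * τ / |u * s - u' * s'| * (u' * τ' / |u * s - u' * s'|))) := by
        rw [hadef, hbdef, habs_a, habs_b]
    _ = 4 * ((u * τ / |u * s - u' * s'|) ^ (1-H) *
            (u' * τ' / |u * s - u' * s'|) ^ (1-H)) :=
        alg_id H (u*τ) (u'*τ') _ (mul_pos hu hτpos) (mul_pos hu' hτ'pos) hEpos
    _ ≤ 4 * ((τ₂/t) ^ (1-H) * (τ₂/t) ^ (1-H)) := by
        have f1 : (u * τ / |u * s - u' * s'|) ^ (1-H) ≤ (τ₂/t) ^ (1-H) :=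
          Real.rpow_le_rpow (by positivity) ha2 (by linarith)
        have f2 : (u' * τ' / |u * s - u' * s'|) ^ (1-H) ≤ (τ₂/t) ^ (1-H) :=
          Real.rpow_le_rpow (by positivity) hb2 (by linarith)
        have hn1 : (0:ℝ) ≤ (u * τ / |u * s - u' * s'|) ^ (1-H) :=
          Real.rpow_nonneg (by positivity) _
        have hn2 : (0:ℝ) ≤ (τ₂/t) ^ (1-H) := Real.rpow_nonneg (by positivity) _
        nlinarith [mul_le_mul f1 f2 (Real.rpow_nonneg (by positivity) _) hn2]
    _ = 4 * (τ₂/t) ^ (2 - 2*H) := by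
        rw [← Real.rpow_add (div_pos hτ₂pos ht0), show (1-H)+(1-H) = 2-2*H by ring]
    _ = 4 * τ₂ ^ (2 - 2*H) * t ^ (-(2 - 2*H)) := by
        rw [Real.div_rpow hτ₂pos.le ht0.le, Real.rpow_neg ht0.le, div_eq_mul_inv]
        ring
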